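/- arXiv:0902.2821 — 3 statements merged into one kernel-verified Lean document; each statement's English description precedes it below -/
import Mathlib

section
/- For any element x of a commutative ℚ-algebra, rational a, b, and integer r ≥ 0: ∑_{s+t=r} ((−1)^t/(s! t!)) · x_a^{[s]} · x_{b−s}^{[t]} = binom(a−b+r−1, r) = (a−b)(a−b+1)⋯(a−b+r−1)/r!. -/
open Finset Polynomial

lemma desc_smeval_prod {A : Type*} [CommRing A] (z : A) (n : ℕ) :
    (descPochhammer ℤ n).smeval z = ∏ i ∈ Finset.range n, (z - (i : A)) := by
  induction n with
  | zero => simp [descPochhammer_zero, smeval_one]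
  | succ n ih =>
    rw [descPochhammer_succ_right, smeval_mul, ih, prod_range_succ, smeval_sub, smeval_X,
      smeval_natCast]
    simp

/-- `∑_{s+t=r} ((−1)^t/(s! t!)) x_a^{[s]} x_{b−s}^{[t]} = binom(a−b+r−1, r)`. -/
theorem sum_falling_falling_eq_choose {A : Type*} [CommRing A] [Algebra ℚ A]
    (x : A) (a b : ℚ) (r : ℕ) :
    (∑ s ∈ Finset.range (r + 1),
        (((-1 : ℚ) ^ (r - s) / ((s.factorial : ℚ) * ((r - s).factorial : ℚ))) •
          ((∏ i ∈ Finset.range s, (x + algebraMap ℚ A (a - (i : ℚ)))) *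
            ∏ i ∈ Finset.range (r - s), (x + algebraMap ℚ A (b - (s : ℚ) - (i : ℚ)))))) =
      algebraMap ℚ A ((∏ i ∈ Finset.range r, (a - b + (i : ℚ))) / (r.factorial : ℚ)) := by
  set X : A := x + algebraMap ℚ A a with hX
  set Y : A := -x + algebraMap ℚ A ((r : ℚ) - 1 - b) with hY
  have hXY : X + Y = algebraMap ℚ A (a - b + (r : ℚ) - 1) := by
    simp only [hX, hY, map_sub, map_add]
    ring
  -- Chu-Vandermonde
  have vdm := Ring.descPochhammer_smeval_add (R := A) r (Commute.all X Y)
  rw [Finset.Nat.sum_antidiagonal_eq_sum_range_succ_mk] at vdm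
  -- rewrite each term of the LHS
  have hterm : ∀ s ∈ Finset.range (r + 1),
      (((-1 : ℚ) ^ (r - s) / ((s.factorial : ℚ) * ((r - s).factorial : ℚ))) •
          ((∏ i ∈ Finset.range s, (x + algebraMap ℚ A (a - (i : ℚ)))) *
            ∏ i ∈ Finset.range (r - s), (x + algebraMap ℚ A (b - (s : ℚ) - (i : ℚ))))) =
      ((r.factorial : ℚ))⁻¹ • ((r.choose s : A) *
        ((descPochhammer ℤ s).smeval X * (descPochhammer ℤ (r - s)).smeval Y)) := by
    intro s hs
    rw [Finset.mem_range] at hs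
    have hs' : s ≤ r := Nat.lt_succ_iff.mp hs
    set t := r - s with ht
    rw [desc_smeval_prod, desc_smeval_prod]
    have hP : ∏ i ∈ Finset.range s, (X - (i : A)) =
        ∏ i ∈ Finset.range s, (x + algebraMap ℚ A (a - (i : ℚ))) := by
      refine Finset.prod_congr rfl fun i _ => ?_
      rw [hX, map_sub]
      simp [algebraMap.coe_natCast]
      ring
    have hQ : ∏ i ∈ Finset.range t, (Y - (i : A)) =
        (-1 : A) ^ t * ∏ i ∈ Finset.range t, (x + algebraMap ℚ A (b - (s : ℚ) - (i : ℚ))) := by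
      rw [← Finset.prod_range_reflect (fun i => Y - (i : A)) t]
      have : ∀ j ∈ Finset.range t, Y - ((t - 1 - j : ℕ) : A) =
          -1 * (x + algebraMap ℚ A (b - (s : ℚ) - (j : ℚ))) := by
        intro j hj
        rw [Finset.mem_range] at hj
        have h1 : ((t - 1 - j : ℕ) : ℚ) = (t : ℚ) - 1 - j := by
          rw [show t - 1 - j = t - (j + 1) by omega, Nat.cast_sub hj]
          push_cast; ring
        have h2 : ((t - 1 - j : ℕ) : A) = algebraMap ℚ A ((t : ℚ) - 1 - j) := by
          rw [← h1]; simp [algebraMap.coe_natCast]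
        have h3 : (t : ℚ) = (r : ℚ) - s := by
          rw [ht]; push_cast [Nat.cast_sub hs']; ring
        have key : algebraMap ℚ A ((r : ℚ) - 1 - b) - algebraMap ℚ A ((t : ℚ) - 1 - j) =
            - algebraMap ℚ A (b - (s : ℚ) - j) := by
          rw [← map_sub, ← map_neg]
          congr 1
          rw [h3]; ring
        rw [hY, h2, add_sub_assoc, key]
        ring
      rw [Finset.prod_congr rfl this]
      rw [Finset.prod_mul_distrib, Finset.prod_const, Finset.card_range]
    rw [hP, hQ]
    have hchoose : (r.choose s : A) = algebraMap ℚ A (r.choose s : ℚ) := by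
      simp
    have hneg : (-1 : A) ^ t = algebraMap ℚ A ((-1 : ℚ) ^ t) := by
      simp
    rw [hchoose, hneg, ← Algebra.smul_def, ← Algebra.smul_def, mul_smul_comm, smul_smul, smul_smul]
    congr 1
    have hfac : (r.factorial : ℚ) = (r.choose s : ℚ) * s.factorial * t.factorial := by
      exact_mod_cast (Nat.choose_mul_factorial_mul_factorial hs').symm
    rw [hfac]
    have h1 : (s.factorial : ℚ) ≠ 0 := Nat.cast_ne_zero.mpr s.factorial_ne_zero
    have h2 : (t.factorial : ℚ) ≠ 0 := Nat.cast_ne_zero.mpr t.factorial_ne_zero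
    have h3 : (r.choose s : ℚ) ≠ 0 := Nat.cast_ne_zero.mpr (Nat.choose_pos hs').ne'
    field_simp
  rw [Finset.sum_congr rfl hterm, ← Finset.smul_sum, ← vdm, desc_smeval_prod, hXY]
  -- now handle RHS
  rw [div_eq_inv_mul, map_mul, ← Algebra.smul_def]
  congr 1
  rw [map_prod, ← Finset.prod_range_reflect
    (fun i => algebraMap ℚ A (a - b + (r : ℚ) - 1) - ((i : ℕ) : A)) r]
  refine Finset.prod_congr rfl fun i hi => ?_
  rw [Finset.mem_range] at hi
  have h1 : ((r - 1 - i : ℕ) : ℚ) = (r : ℚ) - 1 - i := by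
    rw [show r - 1 - i = r - (i + 1) by omega, Nat.cast_sub hi]
    push_cast; ring
  have h2 : ((r - 1 - i : ℕ) : A) = algebraMap ℚ A ((r : ℚ) - 1 - i) := by
    rw [← h1]; simp
  rw [h2, ← map_sub]
  congr 1
  ring
end

section
/- For any integers a, k, ℓ with ℓ ≥ 0, the quantity a^ℓ · ∏_{j=0}^{ℓ−1}(k + j·a) / ℓ! is an integer. -/
/-- The evaluation of the ascending Pochhammer polynomial as a product. -/
lemma ascPochhammer_int_eval_eq_prod (c : ℤ) (n : ℕ) :
    (ascPochhammer ℤ n).eval c = ∏ j ∈ Finset.range n, (c + (j : ℤ)) := by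
  induction n with
  | zero => simp
  | succ n ih => rw [ascPochhammer_succ_eval, Finset.prod_range_succ, ih]

/-- `n!` divides the product of `n` consecutive integers. -/
lemma factorial_dvd_prod_consecutive (c : ℤ) (n : ℕ) :
    ((n.factorial : ℤ)) ∣ ∏ j ∈ Finset.range n, (c + (j : ℤ)) := by
  rw [← ascPochhammer_int_eval_eq_prod, ← Polynomial.ascPochhammer_smeval_eq_eval,
    ← Ring.factorial_nsmul_multichoose_eq_ascPochhammer]
  exact ⟨Ring.multichoose c n, by rw [nsmul_eq_mul]⟩

/-- `ℓ!` divides `a^ℓ · ∏_{j=0}^{ℓ−1}(k + j·a)`. -/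
theorem factorial_dvd_pow_mul_prod (a k : ℤ) (ℓ : ℕ) :
    ((ℓ.factorial : ℤ)) ∣ a ^ ℓ * ∏ j ∈ Finset.range ℓ, (k + (j : ℤ) * a) := by
  set X : ℤ := a ^ ℓ * ∏ j ∈ Finset.range ℓ, (k + (j : ℤ) * a) with hX
  have : ℓ.factorial ∣ X.natAbs := by
    rw [Nat.dvd_iff_prime_pow_dvd_dvd]
    intro p e hp hpe
    have hpp : p.Prime := hp
    have hX' : ((p ^ e : ℕ) : ℤ) ∣ X → p ^ e ∣ X.natAbs := fun h =>
      Int.natCast_dvd_natCast.mp (Int.dvd_natAbs.mpr h)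
    apply hX'
    by_cases hpa : (p : ℤ) ∣ a
    · -- the prime divides `a`; use `e ≤ ℓ` and `p^ℓ ∣ a^ℓ`
      have he : e ≤ ℓ := by
        have h1 : (e : ℕ∞) ≤ emultiplicity p ℓ.factorial :=
          le_emultiplicity_of_pow_dvd hpe
        have h2 := Nat.Prime.emultiplicity_factorial_le_div_pred hpp ℓ
        have h3 : (e : ℕ∞) ≤ ((ℓ / (p - 1) : ℕ) : ℕ∞) := h1.trans h2
        exact (Nat.cast_le.mp h3).trans (Nat.div_le_self _ _)
      have : ((p : ℤ)) ^ e ∣ a ^ ℓ :=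
        dvd_trans (pow_dvd_pow _ he) (pow_dvd_pow_of_dvd hpa ℓ)
      rw [hX]
      push_cast
      exact this.mul_right _
    · -- the prime is coprime to `a`; invert `a` modulo `p^e`
      have hcop : IsCoprime (p : ℤ) a := by
        rw [Int.isCoprime_iff_nat_coprime]
        simp only [Int.natAbs_natCast]
        exact (Nat.Prime.coprime_iff_not_dvd hpp).mpr
          (fun h => hpa (Int.natCast_dvd.mpr h))
      obtain ⟨u, v, huv⟩ := (hcop.pow_left : IsCoprime ((p:ℤ)^e) a)
      -- in `ZMod (p^e)`, we have `v * a = 1`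
      have hpe0 : (((p : ZMod (p ^ e))) ^ e) = 0 := by
        rw [← Nat.cast_pow, ZMod.natCast_self]
      have hv : (v : ZMod (p ^ e)) * (a : ZMod (p ^ e)) = 1 := by
        have := congrArg (Int.cast : ℤ → ZMod (p ^ e)) huv
        push_cast at this
        rw [hpe0] at this
        simpa using this
      -- the consecutive product `∏ (v*k + j)` is divisible by `ℓ!`, hence by `p^e`
      have h0 : ((∏ j ∈ Finset.range ℓ, ((v * k : ℤ) + (j : ℤ)) : ℤ) :
          ZMod (p ^ e)) = 0 := by
        rw [ZMod.intCast_zmod_eq_zero_iff_dvd]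
        refine dvd_trans ?_ (factorial_dvd_prod_consecutive (v * k) ℓ)
        exact_mod_cast Int.natCast_dvd_natCast.mpr hpe
      -- hence `p^e` divides the shifted product
      have key : ((p ^ e : ℕ) : ℤ) ∣ ∏ j ∈ Finset.range ℓ, (k + (j : ℤ) * a) := by
        rw [← ZMod.intCast_zmod_eq_zero_iff_dvd]
        push_cast
        have hfac : ∀ j ∈ Finset.range ℓ,
            ((k : ZMod (p ^ e)) + (j : ZMod (p ^ e)) * (a : ZMod (p ^ e)))
              = (a : ZMod (p ^ e)) * (((v * k : ℤ) : ZMod (p ^ e)) + (j : ZMod (p ^ e))) := by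
          intro j _
          push_cast
          calc (k : ZMod (p ^ e)) + (j : ZMod (p ^ e)) * (a : ZMod (p ^ e))
              = ((v : ZMod (p ^ e)) * a) * k + j * a := by rw [hv]; ring
            _ = (a : ZMod (p ^ e)) * ((v : ZMod (p ^ e)) * k + j) := by ring
        rw [Finset.prod_congr rfl hfac, Finset.prod_mul_distrib,
          Finset.prod_const]
        have : (∏ j ∈ Finset.range ℓ, (((v * k : ℤ) : ZMod (p ^ e)) + (j : ZMod (p ^ e)))) = 0 := by
          rw [← h0]
          push_cast
          rfl
        rw [this, mul_zero]
      rw [hX]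
      exact (key.mul_left _)
  exact Int.dvd_natAbs.mp (Int.natCast_dvd_natCast.mpr this)
end

section
/- Let p be prime and K a field of characteristic p. In the K-algebra generated by h, f with relations [h, f] = f² − f, h^p = h, f^p = 1 (the Radford algebra), define the coalgebra structure by Δ(f) = f ⊗ f, Δ(h) = h ⊗ f + 1 ⊗ h, ε(f)=1, ε(h)=0, S(f) = f^{−1} = f^{p−1}, S(h) = −h f^{−1}. Then these maps make the algebra a Hopf algebra; in particular, Δ is an algebra homomorphism: Δ(h)Δ(f) − Δ(f)Δ(h) = Δ(f)² − Δ(f), Δ(h)^p = Δ(h), and Δ(f)^p = 1⊗1. -/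
open TensorProduct

open Polynomial Finset

/-- Sum of pairwise-orthogonal elements: power distributes. -/
lemma radford_orth_sum_pow {R : Type*} [Ring R] {ι : Type*} (s : Finset ι) (v : ι → R)
    (hv : ∀ i ∈ s, ∀ j ∈ s, i ≠ j → v i * v j = 0) :
    ∀ n : ℕ, (∑ i ∈ s, v i) ^ (n + 1) = ∑ i ∈ s, v i ^ (n + 1) := by
  intro n
  induction n with
  | zero => simp
  | succ n ih =>
    rw [pow_succ, ih, Finset.sum_mul]
    refine Finset.sum_congr rfl fun i hi => ?_
    rw [Finset.mul_sum, Finset.sum_eq_single i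
      (fun j hj hne => by rw [pow_succ, mul_assoc, hv i hi j hj (Ne.symm hne), mul_zero])
      (fun his => absurd hi his), ← pow_succ]

lemma radford_zmod_sum_pow (p : ℕ) [Fact p.Prime] : ∑ x : ZMod p, x ^ (p - 1) = -1 := by
  have hp2 : 2 ≤ p := (Fact.out (p := p.Prime)).two_le
  rw [← Finset.sum_erase_add _ _ (Finset.mem_univ (0 : ZMod p))]
  rw [zero_pow (by omega), add_zero]
  rw [Finset.sum_congr rfl (fun x hx => ZMod.pow_card_sub_one_eq_one (Finset.mem_erase.mp hx).1)]
  rw [Finset.sum_const, Finset.card_erase_of_mem (Finset.mem_univ _), Finset.card_univ,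
    ZMod.card, nsmul_eq_mul, mul_one, Nat.cast_sub (by omega), ZMod.natCast_self, Nat.cast_one,
    zero_sub]

lemma radford_sum_range_cast {p : ℕ} [NeZero p] {M : Type*} [AddCommMonoid M] (g : ZMod p → M) :
    ∑ m ∈ Finset.range p, g (m : ZMod p) = ∑ x : ZMod p, g x := by
  refine Finset.sum_nbij' (fun m => (m : ZMod p)) (fun x => x.val) ?_ ?_ ?_ ?_ ?_
  · intro a _; exact Finset.mem_univ _
  · intro a _; exact Finset.mem_range.mpr (ZMod.val_lt a)
  · intro a ha; exact ZMod.val_cast_of_lt (Finset.mem_range.mp ha)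
  · intro a _; exact ZMod.natCast_rightInverse a
  · intro a _; rfl

lemma radford_zmod_poly_sum (p : ℕ) [Fact p.Prime] :
    ∑ m ∈ Finset.range p, (X - C ((m : ℕ) : ZMod p)) ^ (p - 1) = -1 := by
  have hp2 : 2 ≤ p := (Fact.out (p := p.Prime)).two_le
  have key : (∑ m ∈ Finset.range p, (X - C ((m : ℕ) : ZMod p)) ^ (p - 1)) + 1 = 0 := by
    apply Polynomial.eq_zero_of_natDegree_lt_card_of_eval_eq_zero _ (Function.injective_id)
    · intro a
      simp only [id_eq, eval_add, eval_one, eval_finset_sum, eval_pow, eval_sub, eval_X, eval_C]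
      haveI : NeZero p := ⟨by omega⟩
      have h1 : ∑ m ∈ Finset.range p, (a - ((m : ℕ) : ZMod p)) ^ (p - 1)
          = ∑ x : ZMod p, (a - x) ^ (p - 1) :=
        radford_sum_range_cast (fun x => (a - x) ^ (p - 1))
      have h2 : ∑ x : ZMod p, (a - x) ^ (p - 1) = ∑ x : ZMod p, x ^ (p - 1) :=
        Fintype.sum_equiv (Equiv.subLeft a) _ _ (fun x => rfl)
      rw [h1, h2, radford_zmod_sum_pow p, neg_add_cancel]
    · rw [ZMod.card]
      have hd : ((∑ m ∈ Finset.range p, (X - C ((m : ℕ) : ZMod p)) ^ (p - 1)) +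
          (1 : (ZMod p)[X])).natDegree ≤ p - 1 := by
        refine (Polynomial.natDegree_add_le _ _).trans ?_
        rw [Polynomial.natDegree_one]
        refine max_le ?_ (by omega)
        refine Polynomial.natDegree_sum_le_of_forall_le _ _ fun i _ => ?_
        refine Polynomial.natDegree_pow_le.trans ?_
        calc (p - 1) * (X - C ((i : ℕ) : ZMod p)).natDegree
            ≤ (p - 1) * 1 := Nat.mul_le_mul_left _ (Polynomial.natDegree_X_sub_C_le _)
          _ = p - 1 := Nat.mul_one _
      omega
  exact eq_neg_of_add_eq_zero_left key

/-- The Radford algebra relations are compatible with the Hopf structure: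
with `Δ(f) = f⊗f`, `Δ(h) = h⊗f + 1⊗h`, the comultiplication respects the three
defining relations, and the antipode identities hold on generators. -/
theorem radford_hopf_structure {K : Type*} [Field K] (p : ℕ) [Fact p.Prime]
    [CharP K p] {A : Type*} [Ring A] [Algebra K A] (h f : A)
    (r1 : h * f - f * h = f ^ 2 - f) (r2 : h ^ p = h) (r3 : f ^ p = 1) :
    ((h ⊗ₜ[K] f + 1 ⊗ₜ[K] h) * (f ⊗ₜ[K] f) - (f ⊗ₜ[K] f) * (h ⊗ₜ[K] f + 1 ⊗ₜ[K] h)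
        = (f ⊗ₜ[K] f) ^ 2 - (f ⊗ₜ[K] f)) ∧
    (h ⊗ₜ[K] f + 1 ⊗ₜ[K] h) ^ p = h ⊗ₜ[K] f + 1 ⊗ₜ[K] h ∧
    (f ⊗ₜ[K] f) ^ p = 1 ∧
    f ^ (p - 1) * f = 1 ∧
    (-(h * f ^ (p - 1))) * f + h = 0 := by
  have hp2 : 2 ≤ p := (Fact.out (p := p.Prime)).two_le
  have hp1 : p - 1 + 1 = p := by omega
  have key : h * f = (f ^ 2 - f) + f * h := sub_eq_iff_eq_add.mp r1
  have hfp1 : f ^ (p - 1) * f = 1 := by rw [← pow_succ, hp1, r3]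
  have hanti : (-(h * f ^ (p - 1))) * f + h = 0 := by
    rw [neg_mul, mul_assoc, hfp1, mul_one, neg_add_cancel]
  have hc1 : (h ⊗ₜ[K] f + 1 ⊗ₜ[K] h) * (f ⊗ₜ[K] f) - (f ⊗ₜ[K] f) * (h ⊗ₜ[K] f + 1 ⊗ₜ[K] h)
      = (f ⊗ₜ[K] f) ^ 2 - (f ⊗ₜ[K] f) := by
    simp only [add_mul, mul_add, Algebra.TensorProduct.tmul_mul_tmul, one_mul, mul_one,
      Algebra.TensorProduct.tmul_pow, key, pow_two]
    simp only [TensorProduct.add_tmul, TensorProduct.tmul_add, TensorProduct.sub_tmul,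
      TensorProduct.tmul_sub]
    abel
  have hc3 : (f ⊗ₜ[K] f) ^ p = (1 : A ⊗[K] A) := by
    rw [Algebra.TensorProduct.tmul_pow, r3, Algebra.TensorProduct.one_def]
  refine ⟨hc1, ?_, hc3, hfp1, hanti⟩
  -- the hard part : Δ(h)^p = Δ(h)
  by_cases htriv : (1 : A) = 0
  · haveI : Subsingleton (A ⊗[K] A) := by
      refine subsingleton_of_zero_eq_one ?_
      rw [Algebra.TensorProduct.one_def, htriv]
      exact (TensorProduct.zero_tmul _ _).symm
    exact Subsingleton.elim _ _
  haveI : Nontrivial A := nontrivial_of_ne 1 0 htriv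
  haveI : CharP A p := charP_of_injective_algebraMap (algebraMap K A).injective p
  -- cast facts
  have kcast : ∀ m : ℕ, ((m : A)) ^ p = (m : A) := by
    intro m
    have hK : ((m : K)) ^ p = (m : K) := by
      have hz := congrArg (ZMod.castHom dvd_rfl K) (ZMod.pow_card (m : ZMod p))
      rwa [map_pow, map_natCast] at hz
    have : ((m : A)) = algebraMap K A (m : K) := by simp
    rw [this, ← map_pow, hK]
  -- commutation of h with powers of f
  have hcomm : ∀ m : ℕ, h * f ^ m = f ^ m * h + (m : A) * (f ^ m * f - f ^ m) := by
    intro m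
    induction m with
    | zero => simp
    | succ m ih =>
      have keyf : h * f = f * f - f + f * h := by rw [key, pow_two]
      simp only [pow_succ]
      rw [← mul_assoc h (f ^ m) f, ih]
      push_cast
      simp only [add_mul, sub_mul, mul_add, mul_sub, mul_assoc, one_mul, mul_one, keyf]
      abel
  -- conjugation identity
  have vcomm : ∀ m : ℕ, (h + (m : A)) * f ^ m = f ^ m * (h + (m : A) * f) := by
    intro m
    rw [add_mul, hcomm m, mul_add, ← mul_assoc (f ^ m) ((m : A)) f,
      ← (Nat.cast_commute m (f ^ m)).eq, mul_assoc ((m : A)) (f ^ m) f, mul_sub]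
    abel
  -- cancellation by f ^ m
  have hcancel : ∀ m : ℕ, ∀ x y : A, f ^ m * x = f ^ m * y → x = y := by
    intro m x y hxy
    have hfm : f ^ (m * (p - 1)) * f ^ m = 1 := by
      have harith : m * (p - 1) + m = p * m := by
        rw [← Nat.mul_succ, Nat.succ_eq_add_one, hp1, Nat.mul_comm]
      rw [← pow_add, harith, pow_mul, r3, one_pow]
    calc x = (f ^ (m * (p - 1)) * f ^ m) * x := by rw [hfm, one_mul]
      _ = f ^ (m * (p - 1)) * (f ^ m * y) := by rw [mul_assoc, hxy]
      _ = y := by rw [← mul_assoc, hfm, one_mul]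
  -- the scalar-shift p-th power identity in A
  have L2 : ∀ m : ℕ, (h + (m : A) * f) ^ p = h + (m : A) * f := by
    intro m
    have hvp : (h + (m : A)) ^ p = h + (m : A) :=
      (add_pow_char_of_commute p (Nat.cast_commute m h).symm).trans (by rw [r2, kcast])
    have hvn : ∀ n : ℕ, (h + (m : A)) ^ n * f ^ m = f ^ m * (h + (m : A) * f) ^ n := by
      intro n
      induction n with
      | zero => simp
      | succ n ih => rw [pow_succ, mul_assoc, vcomm m, ← mul_assoc, ih, mul_assoc, ← pow_succ]
    apply hcancel m
    rw [← hvn p, hvp, vcomm m]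
  -- idempotents e m = 1 - (h - m)^(p-1)
  have hsubp : ∀ m : ℕ, (h - (m : A)) ^ p = h - (m : A) := fun m =>
    (sub_pow_char_of_commute p (Nat.cast_commute m h).symm).trans (by rw [r2, kcast])
  set q : ℕ → A := fun m => (h - (m : A)) ^ (p - 1) with hqdef
  set e : ℕ → A := fun m => 1 - q m with hedef
  have hqq : ∀ m : ℕ, q m * q m = q m := by
    intro m
    show (h - (m : A)) ^ (p - 1) * (h - (m : A)) ^ (p - 1) = (h - (m : A)) ^ (p - 1)
    rw [← pow_add]
    have h1 : p - 1 + (p - 1) = (p - 2) + p := by omega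
    have h2 : p - 2 + 1 = p - 1 := by omega
    rw [h1, pow_add, hsubp, ← pow_succ, h2]
  have hqe : ∀ m : ℕ, (h - (m : A)) * q m = h - (m : A) := by
    intro m
    show (h - (m : A)) * (h - (m : A)) ^ (p - 1) = h - (m : A)
    rw [← pow_succ', hp1, hsubp]
  have hhe : ∀ m : ℕ, h * e m = (m : A) * e m := by
    intro m
    have h0 : (h - (m : A)) * e m = 0 := by
      rw [hedef, mul_sub, mul_one, hqe, sub_self]
    rw [sub_mul] at h0
    exact sub_eq_zero.mp h0
  have hidem : ∀ m : ℕ, e m * e m = e m := by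
    intro m
    show (1 - q m) * (1 - q m) = 1 - q m
    calc (1 - q m) * (1 - q m) = 1 - q m - q m + q m * q m := by noncomm_ring
      _ = 1 - q m := by rw [hqq]; abel
  have hcome : ∀ m : ℕ, Commute h (e m) := fun m =>
    (Commute.one_right h).sub_right
      (((Commute.refl h).sub_right (Nat.cast_commute m h).symm).pow_right (p - 1))
  have orth : ∀ m ∈ Finset.range p, ∀ n ∈ Finset.range p, m ≠ n → e m * e n = 0 := by
    intro m hm n hn hmn
    have h1 : (m : A) * (e m * e n) = (n : A) * (e m * e n) := by
      calc (m : A) * (e m * e n) = ((m : A) * e m) * e n := (mul_assoc _ _ _).symm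
        _ = (h * e m) * e n := by rw [hhe m]
        _ = (e m * h) * e n := by rw [(hcome m).eq]
        _ = e m * (h * e n) := mul_assoc _ _ _
        _ = e m * ((n : A) * e n) := by rw [hhe n]
        _ = (e m * (n : A)) * e n := (mul_assoc _ _ _).symm
        _ = ((n : A) * e m) * e n := by rw [(Nat.cast_commute n (e m)).eq]
        _ = (n : A) * (e m * e n) := mul_assoc _ _ _
    have h0 : ((m : A) - (n : A)) * (e m * e n) = 0 := by
      rw [sub_mul, h1, sub_self]
    have hKne : ((m : K)) ≠ (n : K) := fun hc =>
      hmn (CharP.natCast_injOn_Iio K p (Set.mem_Iio.mpr (Finset.mem_range.mp hm))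
        (Set.mem_Iio.mpr (Finset.mem_range.mp hn)) hc)
    have hmap : ((m : A) - (n : A)) = algebraMap K A ((m : K) - (n : K)) := by
      rw [map_sub, map_natCast, map_natCast]
    have hu : IsUnit ((m : A) - (n : A)) := by
      rw [hmap]
      exact (isUnit_iff_ne_zero.mpr (sub_ne_zero.mpr hKne)).map (algebraMap K A)
    exact (hu.mul_right_eq_zero).mp h0
  -- completeness : the idempotents sum to 1
  have hqsum : ∑ m ∈ Finset.range p, q m = -1 := by
    set φ : ZMod p →+* A := (algebraMap K A).comp (ZMod.castHom dvd_rfl K) with hφdef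
    have hφc : ∀ a : ZMod p, Commute (φ a) h := fun a =>
      Algebra.commutes ((ZMod.castHom dvd_rfl K) a) h
    set ev : (ZMod p)[X] →+* A := Polynomial.eval₂RingHom' φ h hφc with hevdef
    have hev : ∀ P : (ZMod p)[X], ev P = Polynomial.eval₂ φ h P := fun _ => rfl
    have := congrArg ev (radford_zmod_poly_sum p)
    rw [map_sum, map_neg, map_one] at this
    calc ∑ m ∈ Finset.range p, q m
        = ∑ m ∈ Finset.range p, ev ((X - C ((m : ℕ) : ZMod p)) ^ (p - 1)) := by
          refine Finset.sum_congr rfl fun m _ => ?_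
          rw [map_pow, map_sub, hev, hev, Polynomial.eval₂_X, Polynomial.eval₂_C]
          show ((h - (m : A)) ^ (p - 1) : A) = _
          congr 2
          rw [hφdef]
          simp
      _ = -1 := this
  have hesum : ∑ m ∈ Finset.range p, e m = 1 := by
    rw [hedef]
    rw [Finset.sum_sub_distrib, hqsum, Finset.sum_const, Finset.card_range, nsmul_eq_mul,
      mul_one, CharP.cast_eq_zero A p, zero_sub, neg_neg]
  -- assemble in the tensor product
  set g : ℕ → A := fun m => h + (m : A) * f with hgdef
  set w : ℕ → A ⊗[K] A := fun m => e m ⊗ₜ[K] g m with hwdef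
  have hw : ∀ m : ℕ, w m = e m ⊗ₜ[K] h + (h * e m) ⊗ₜ[K] f := by
    intro m
    have hsmulf : (m : A) * f = ((m : K) • f) := by rw [Algebra.smul_def, map_natCast]
    have hsmule : ((m : K) • e m) = h * e m := by
      rw [Algebra.smul_def, map_natCast, ← hhe m]
    calc w m = e m ⊗ₜ[K] h + e m ⊗ₜ[K] ((m : A) * f) := by
          rw [hwdef]; exact TensorProduct.tmul_add _ _ _
      _ = e m ⊗ₜ[K] h + (h * e m) ⊗ₜ[K] f := by
          rw [hsmulf, TensorProduct.tmul_smul, TensorProduct.smul_tmul', hsmule]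
  have hw_sum : ∑ m ∈ Finset.range p, w m = h ⊗ₜ[K] f + 1 ⊗ₜ[K] h := by
    rw [Finset.sum_congr rfl fun m _ => hw m, Finset.sum_add_distrib,
      ← TensorProduct.sum_tmul, hesum, ← TensorProduct.sum_tmul, ← Finset.mul_sum, hesum,
      mul_one]
    exact add_comm _ _
  have orthw : ∀ m ∈ Finset.range p, ∀ n ∈ Finset.range p, m ≠ n → w m * w n = 0 := by
    intro m hm n hn hmn
    rw [hwdef]
    show (e m ⊗ₜ[K] g m) * (e n ⊗ₜ[K] g n) = 0
    rw [Algebra.TensorProduct.tmul_mul_tmul, orth m hm n hn hmn, TensorProduct.zero_tmul]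
  have hwp : ∀ m : ℕ, w m ^ p = w m := by
    intro m
    rw [hwdef]
    show (e m ⊗ₜ[K] g m) ^ p = e m ⊗ₜ[K] g m
    rw [Algebra.TensorProduct.tmul_pow]
    rw [hgdef]
    show (e m ^ p) ⊗ₜ[K] ((h + (m : A) * f) ^ p) = _
    rw [L2 m, ← hp1, IsIdempotentElem.pow_succ_eq (p - 1) (hidem m)]
  calc (h ⊗ₜ[K] f + 1 ⊗ₜ[K] h) ^ p = (∑ m ∈ Finset.range p, w m) ^ (p - 1 + 1) := by
        rw [hw_sum, hp1]
    _ = ∑ m ∈ Finset.range p, w m ^ (p - 1 + 1) := radford_orth_sum_pow _ _ orthw _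
    _ = ∑ m ∈ Finset.range p, w m := Finset.sum_congr rfl fun m _ => by rw [hp1, hwp m]
    _ = h ⊗ₜ[K] f + 1 ⊗ₜ[K] h := hw_sum
end
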